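/- For every n ≥ 3, the cycle C_n is independence equivalent to the graph D_n; that is, for every k, the number of independent sets of size k in C_n equals the number of independent sets of size k in D_n. -/
import Mathlib


open SimpleGraph Polynomial Finset

/-- The number of independent sets of size `k` in the graph `G`. -/
noncomputable def indepCount {V : Type*} [Fintype V] (G : SimpleGraph V) (k : ℕ) : ℕ :=
  Nat.card {s : Finset V // s.card = k ∧ ∀ u ∈ s, ∀ v ∈ s, ¬ G.Adj u v}

/-- The graph `D_n`: a triangle on the vertices `0, 1, 2` together with the
pendant path `2 - 3 - ⋯ - (n-1)`. -/
def dGraph (n : ℕ) : SimpleGraph (Fin n) :=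
  SimpleGraph.fromRel (fun u v =>
    (u.val = 0 ∧ v.val = 1) ∨ (u.val = 0 ∧ v.val = 2) ∨ (u.val = 1 ∧ v.val = 2) ∨
    (2 ≤ u.val ∧ v.val = u.val + 1))

/-- The relation generating `dGraph`. -/
private def dRel (n : ℕ) (u v : Fin n) : Prop :=
  (u.val = 0 ∧ v.val = 1) ∨ (u.val = 0 ∧ v.val = 2) ∨ (u.val = 1 ∧ v.val = 2) ∨
    (2 ≤ u.val ∧ v.val = u.val + 1)

/-- The bijection on finsets: shift everything but `0` up by one if `0` is a member. -/
private def eMap (n : ℕ) [NeZero n] (s : Finset (Fin n)) : Finset (Fin n) :=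
  if (0 : Fin n) ∈ s then insert 0 ((s.erase 0).image (· + 1)) else s

section Aux

variable {n : ℕ} [NeZero n]

private lemma fin_val_one (hn : 3 ≤ n) : (1 : Fin n).val = 1 := by
  simp [Fin.val_one', Nat.mod_eq_of_lt (show 1 < n by omega)]

private lemma fin_val_add_one (hn : 3 ≤ n) (x : Fin n) :
    (x + 1).val = if x.val + 1 = n then 0 else x.val + 1 := by
  rw [Fin.val_add, fin_val_one hn]
  have := x.isLt
  split
  · next h => rw [h, Nat.mod_self]
  · exact Nat.mod_eq_of_lt (by omega)

private lemma fin_val_sub_one (hn : 3 ≤ n) (x : Fin n) (hx : x.val ≠ 0) : (x - 1).val = x.val - 1 := by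
  have h := fin_val_add_one hn (x - 1)
  rw [sub_add_cancel x 1] at h
  have := (x - 1).isLt
  split at h <;> omega

private lemma fin_val_zero_eq (x : Fin n) (hx : x.val = 0) : x = 0 := by
  rw [Fin.ext_iff, hx, Fin.val_zero]

/-- range fact: in an independent set of the cycle containing `0`,
all other elements have value in `[2, n-2]`. -/
private lemma range_lemma (hn : 3 ≤ n) {s : Finset (Fin n)}
    (hs : ∀ u ∈ s, ∀ v ∈ s, v ≠ u + 1) (h0 : (0 : Fin n) ∈ s) :
    ∀ x ∈ s, x ≠ 0 → 2 ≤ x.val ∧ x.val + 1 < n := by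
  intro x hx hx0
  have h1 : x ≠ 0 + 1 := hs 0 h0 x hx
  have h2 : (0 : Fin n) ≠ x + 1 := hs x hx 0 h0
  have hx1 : x.val ≠ 1 := by
    rw [Ne, Fin.ext_iff, zero_add, fin_val_one hn] at h1
    exact h1
  have hx2 : x.val + 1 ≠ n := by
    intro hc
    apply h2
    rw [Fin.ext_iff, Fin.val_zero, fin_val_add_one hn, if_pos hc]
  rw [Ne, Fin.ext_iff, Fin.val_zero] at hx0
  have := x.isLt
  omega

private lemma eMap_card (hn : 3 ≤ n) {s : Finset (Fin n)}
    (hs : ∀ u ∈ s, ∀ v ∈ s, v ≠ u + 1) : (eMap n s).card = s.card := by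
  unfold eMap
  split
  · next h0 =>
    have hrange := range_lemma hn hs h0
    have hmem : ∀ y ∈ (s.erase 0).image (· + 1), 3 ≤ y.val ∧ y.val < n := by
      intro y hy
      simp only [mem_image] at hy
      obtain ⟨x, hx, rfl⟩ := hy
      obtain ⟨hx1, hx2⟩ := hrange x (mem_of_mem_erase hx) (ne_of_mem_erase hx)
      rw [fin_val_add_one hn, if_neg (by omega)]
      omega
    have h0nm : (0 : Fin n) ∉ (s.erase 0).image (· + 1) := by
      intro hc
      have := hmem 0 hc
      simp [Fin.val_zero] at this
    rw [card_insert_of_notMem h0nm,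
      card_image_of_injective _ (add_left_injective (1 : Fin n)),
      card_erase_of_mem h0]
    have := card_pos.mpr ⟨0, h0⟩
    omega
  · rfl

private lemma eMap_indep (hn : 3 ≤ n) {s : Finset (Fin n)}
    (hs : ∀ u ∈ s, ∀ v ∈ s, v ≠ u + 1) :
    ∀ u ∈ eMap n s, ∀ v ∈ eMap n s, ¬ dRel n u v := by
  unfold eMap
  split
  · next h0 =>
    have hrange := range_lemma hn hs h0
    have hmem : ∀ y ∈ (s.erase 0).image (· + 1), 3 ≤ y.val ∧ y.val < n := by
      intro y hy
      simp only [mem_image] at hy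
      obtain ⟨x, hx, rfl⟩ := hy
      obtain ⟨hx1, hx2⟩ := hrange x (mem_of_mem_erase hx) (ne_of_mem_erase hx)
      rw [fin_val_add_one hn, if_neg (by omega)]
      omega
    intro u hu v hv hrel
    rw [mem_insert] at hu hv
    unfold dRel at hrel
    -- values of non-zero members are ≥ 3
    rcases hu with rfl | hu
    · rcases hv with rfl | hv
      · simp [Fin.val_zero] at hrel
      · have := hmem v hv
        simp only [Fin.val_zero] at hrel
        omega
    · have hu3 := hmem u hu
      rcases hv with rfl | hv
      · simp only [Fin.val_zero] at hrel
        omega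
      · have hv3 := hmem v hv
        -- only the path disjunct can apply; contradict hs
        have hpath : v.val = u.val + 1 := by omega
        simp only [mem_image] at hu hv
        obtain ⟨x, hx, rfl⟩ := hu
        obtain ⟨y, hy, rfl⟩ := hv
        obtain ⟨hx1, hx2⟩ := hrange x (mem_of_mem_erase hx) (ne_of_mem_erase hx)
        obtain ⟨hy1, hy2⟩ := hrange y (mem_of_mem_erase hy) (ne_of_mem_erase hy)
        rw [fin_val_add_one hn, if_neg (by omega), fin_val_add_one hn, if_neg (by omega)]
          at hpath
        have : y = x + 1 := by
          rw [Fin.ext_iff, fin_val_add_one hn, if_neg (by omega)]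
          omega
        exact hs x (mem_of_mem_erase hx) y (mem_of_mem_erase hy) this
  · next h0 =>
    intro u hu v hv hrel
    unfold dRel at hrel
    have hu0 : u.val ≠ 0 := fun h => h0 (fin_val_zero_eq u h ▸ hu)
    have hv0 : v.val ≠ 0 := fun h => h0 (fin_val_zero_eq v h ▸ hv)
    have hvlt := v.isLt
    have hpath : v.val = u.val + 1 ∧ 1 ≤ u.val := by omega
    have : v = u + 1 := by
      rw [Fin.ext_iff, fin_val_add_one hn, if_neg (by omega)]
      omega
    exact hs u hu v hv this

private lemma eMap_inj (hn : 3 ≤ n) {s t : Finset (Fin n)}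
    (hs : ∀ u ∈ s, ∀ v ∈ s, v ≠ u + 1) (ht : ∀ u ∈ t, ∀ v ∈ t, v ≠ u + 1)
    (h : eMap n s = eMap n t) : s = t := by
  have key : ∀ (w : Finset (Fin n)), (∀ u ∈ w, ∀ v ∈ w, v ≠ u + 1) →
      ((0 : Fin n) ∈ eMap n w ↔ (0 : Fin n) ∈ w) := by
    intro w hw
    unfold eMap
    split
    · next h0 => simp [h0]
    · next h0 => simp [h0]
  have hzs : ∀ (w : Finset (Fin n)), (∀ u ∈ w, ∀ v ∈ w, v ≠ u + 1) → (0 : Fin n) ∈ w →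
      (0 : Fin n) ∉ (w.erase 0).image (· + 1) := by
    intro w hw h0 hc
    simp only [mem_image] at hc
    obtain ⟨x, hx, hx1⟩ := hc
    obtain ⟨h1, h2⟩ := range_lemma hn hw h0 x (mem_of_mem_erase hx) (ne_of_mem_erase hx)
    rw [Fin.ext_iff, fin_val_add_one hn, if_neg (by omega), Fin.val_zero] at hx1
    omega
  by_cases h0s : (0 : Fin n) ∈ s <;> by_cases h0t : (0 : Fin n) ∈ t
  · have heq : (s.erase 0).image (· + 1) = (t.erase 0).image (· + 1) := by
      have h1 := hzs s hs h0s
      have h2 := hzs t ht h0t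
      unfold eMap at h
      rw [if_pos h0s, if_pos h0t] at h
      rw [← Finset.erase_insert h1, ← Finset.erase_insert h2, h]
    have herase : s.erase 0 = t.erase 0 :=
      Finset.image_injective (add_left_injective (1 : Fin n)) heq
    rw [← insert_erase h0s, ← insert_erase h0t, herase]
  · exfalso
    apply h0t
    rw [← key t ht, ← h, key s hs]
    exact h0s
  · exfalso
    apply h0s
    rw [← key s hs, h, key t ht]
    exact h0t
  · unfold eMap at h
    rwa [if_neg h0s, if_neg h0t] at h

private lemma eMap_surj (hn : 3 ≤ n) {t : Finset (Fin n)}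
    (ht : ∀ u ∈ t, ∀ v ∈ t, ¬ dRel n u v) :
    ∃ s : Finset (Fin n), (∀ u ∈ s, ∀ v ∈ s, v ≠ u + 1) ∧ eMap n s = t := by
  by_cases h0 : (0 : Fin n) ∈ t
  · -- non-zero elements of t have value ≥ 3
    have hge3 : ∀ x ∈ t, x ≠ 0 → 3 ≤ x.val := by
      intro x hx hx0
      have h1 := ht 0 h0 x hx
      unfold dRel at h1
      rw [Ne, Fin.ext_iff, Fin.val_zero] at hx0
      simp at h1
      omega
    refine ⟨insert 0 ((t.erase 0).image (· - 1)), ?_, ?_⟩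
    · -- independence in the cycle
      have hmem : ∀ y ∈ (t.erase 0).image (· - 1), 2 ≤ y.val ∧ y.val + 2 ≤ n := by
        intro y hy
        simp only [mem_image] at hy
        obtain ⟨x, hx, rfl⟩ := hy
        have h3 := hge3 x (mem_of_mem_erase hx) (ne_of_mem_erase hx)
        have := x.isLt
        rw [fin_val_sub_one hn x (by omega)]
        omega
      intro u hu v hv hveq
      rw [mem_insert] at hu hv
      rcases hu with rfl | hu
      · -- u = 0, v = 1
        have hv1 : v.val = 1 := by
          rw [hveq, fin_val_add_one hn, Fin.val_zero, if_neg (by omega)]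
        rcases hv with rfl | hv
        · simp [Fin.val_zero] at hv1
        · have := hmem _ hv
          omega
      · obtain ⟨hu2, hu3⟩ := hmem u hu
        have hvval : v.val = u.val + 1 := by
          rw [hveq, fin_val_add_one hn, if_neg (by omega)]
        rcases hv with rfl | hv
        · simp [Fin.val_zero] at hvval
        · obtain ⟨hv2, hv3⟩ := hmem v hv
          simp only [mem_image] at hu hv
          obtain ⟨x, hx, rfl⟩ := hu
          obtain ⟨y, hy, rfl⟩ := hv
          have hx3 := hge3 x (mem_of_mem_erase hx) (ne_of_mem_erase hx)
          have hy3 := hge3 y (mem_of_mem_erase hy) (ne_of_mem_erase hy)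
          rw [fin_val_sub_one hn x (by omega), fin_val_sub_one hn y (by omega)] at hvval
          have hyx : y.val = x.val + 1 := by omega
          apply ht x (mem_of_mem_erase hx) y (mem_of_mem_erase hy)
          unfold dRel
          omega
    · -- eMap maps it back to t
      have h0nm : (0 : Fin n) ∉ (t.erase 0).image (· - 1) := by
        intro hc
        simp only [mem_image] at hc
        obtain ⟨x, hx, hx1⟩ := hc
        have h3 := hge3 x (mem_of_mem_erase hx) (ne_of_mem_erase hx)
        have := congrArg Fin.val hx1
        rw [fin_val_sub_one hn x (by omega), Fin.val_zero] at this
        omega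
      unfold eMap
      rw [if_pos (mem_insert_self 0 _), Finset.erase_insert h0nm, Finset.image_image]
      have : ((· + 1) ∘ (· - 1) : Fin n → Fin n) = id := by
        funext x
        simp [sub_add_cancel]
      rw [this, Finset.image_id, insert_erase h0]
  · -- t itself works
    refine ⟨t, ?_, by rw [eMap, if_neg h0]⟩
    intro u hu v hv hveq
    have hu0 : u.val ≠ 0 := fun h => h0 (fin_val_zero_eq u h ▸ hu)
    have hv0 : v.val ≠ 0 := fun h => h0 (fin_val_zero_eq v h ▸ hv)
    have hvlt := v.isLt
    have hvval : v.val = (u + 1).val := by rw [hveq]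
    rw [fin_val_add_one hn] at hvval
    apply ht u hu v hv
    unfold dRel
    split at hvval <;> omega

end Aux

theorem cycle_indepEquiv_dGraph (n : ℕ) (hn : 3 ≤ n) (k : ℕ) :
    indepCount (SimpleGraph.cycleGraph n) k = indepCount (dGraph n) k := by
  classical
  haveI : NeZero n := ⟨by omega⟩
  -- characterization of independence in the cycle
  have hC : ∀ s : Finset (Fin n),
      (∀ u ∈ s, ∀ v ∈ s, ¬ (SimpleGraph.cycleGraph n).Adj u v) ↔
      (∀ u ∈ s, ∀ v ∈ s, v ≠ u + 1) := by
    intro s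
    have hone : (1 : Fin n).val = 1 := fin_val_one hn
    constructor
    · intro h u hu v hv hveq
      apply h u hu v hv
      rw [SimpleGraph.cycleGraph_adj']
      right
      rw [hveq, add_sub_cancel_left, hone]
    · intro h u hu v hv hadj
      rw [SimpleGraph.cycleGraph_adj'] at hadj
      rcases hadj with h1 | h1
      · apply h v hv u hu
        have : u - v = 1 := by rw [Fin.ext_iff, h1, hone]
        exact ((eq_add_of_sub_eq this).trans (add_comm 1 v))
      · apply h u hu v hv
        have : v - u = 1 := by rw [Fin.ext_iff, h1, hone]
        exact ((eq_add_of_sub_eq this).trans (add_comm 1 u))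
  -- characterization of independence in dGraph
  have hD : ∀ s : Finset (Fin n),
      (∀ u ∈ s, ∀ v ∈ s, ¬ (dGraph n).Adj u v) ↔
      (∀ u ∈ s, ∀ v ∈ s, ¬ dRel n u v) := by
    intro s
    constructor
    · intro h u hu v hv hrel
      apply h u hu v hv
      rw [dGraph, SimpleGraph.fromRel_adj]
      refine ⟨?_, Or.inl hrel⟩
      rw [Ne, Fin.ext_iff]
      unfold dRel at hrel
      omega
    · intro h u hu v hv hadj
      rw [dGraph, SimpleGraph.fromRel_adj] at hadj
      rcases hadj.2 with h1 | h1
      · exact h u hu v hv h1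
      · exact h v hv u hu h1
  -- build the bijection
  apply Nat.card_eq_of_bijective
    (fun s => ⟨eMap n s.1,
      by rw [eMap_card hn ((hC s.1).mp s.2.2)]; exact s.2.1,
      (hD _).mpr (eMap_indep hn ((hC s.1).mp s.2.2))⟩)
  constructor
  · rintro ⟨s, hs⟩ ⟨t, ht⟩ h
    simp only [Subtype.mk.injEq] at h ⊢
    exact eMap_inj hn ((hC s).mp hs.2) ((hC t).mp ht.2) h
  · rintro ⟨t, htc, hti⟩
    obtain ⟨s, hs1, hs2⟩ := eMap_surj hn ((hD t).mp hti)
    refine ⟨⟨s, ?_, (hC s).mpr hs1⟩, ?_⟩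
    · rw [← htc, ← hs2, eMap_card hn hs1]
    · simp only [Subtype.mk.injEq]
      exact hs2
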